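/- Let r ≥ 1 be an integer, let u_1 < u_2 < ⋯ < u_{r+2} be reals, and let v_1, …, v_{r+2} be reals. For j ∈ {1, …, r+2}, let D_j denote the determinant of the (r+1)×(r+1) matrix whose rows are (1, u_l, u_l², …, u_l^{r−1}, v_l) for l ranging over {1, …, r+2} \ {j} in increasing order. If D_1 ≥ 0 and D_{r+2} ≥ 0, then D_j ≥ 0 for every j ∈ {2, …, r+1}. -/
import Mathlib

private lemma affine_nonneg_of_endpoints {a b p q x : ℝ} (hpx : p ≤ x) (hxq : x ≤ q)
    (hp : 0 ≤ a + b * p) (hq : 0 ≤ a + b * q) : 0 ≤ a + b * x := by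
  rcases eq_or_lt_of_le (hpx.trans hxq) with h | h
  · have hx : x = p := le_antisymm (h ▸ hxq) hpx
    simpa [hx] using hp
  · nlinarith [mul_nonneg (sub_nonneg.mpr hxq) hp, mul_nonneg (sub_nonneg.mpr hpx) hq]

/-- Claim 1 of the Appendix: for `u_1 < ⋯ < u_{r+2}` and reals `v_1, …, v_{r+2}`, if the
determinants `D_1` (deleting the first row) and `D_{r+2}` (deleting the last row) are
nonnegative, then so is every `D_j` obtained by deleting an intermediate row. -/
theorem det_delete_row_nonneg
    (r : ℕ) (hr : 1 ≤ r) (u v : Fin (r + 2) → ℝ) (hu : StrictMono u)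
    (D : Fin (r + 2) → ℝ)
    (hD : ∀ j, D j = Matrix.det (Matrix.of fun l m : Fin (r + 1) =>
      if (m : ℕ) = r then v (j.succAbove l) else (u (j.succAbove l)) ^ (m : ℕ)))
    (h1 : 0 ≤ D 0) (h2 : 0 ≤ D (Fin.last (r + 1))) :
    ∀ j : Fin (r + 2), j ≠ 0 → j ≠ Fin.last (r + 1) → 0 ≤ D j := by
  classical
  -- the Vandermonde minors
  set V : Fin (r + 2) → ℝ := fun j => (Matrix.vandermonde (u ∘ j.succAbove)).det with hVdef
  have hVpos : ∀ j, 0 < V j := by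
    intro j
    simp only [hVdef, Matrix.det_vandermonde]
    refine Finset.prod_pos fun i _ => Finset.prod_pos fun i' hi' => ?_
    have hii' : i < i' := Finset.mem_Ioi.mp hi'
    exact sub_pos.mpr (hu ((Fin.strictMono_succAbove j) hii'))
  -- cofactor expansion, family A (with v-column): moment relations for D
  have expA : ∀ k : ℕ, k < r →
      ∑ j : Fin (r + 2), (-1 : ℝ) ^ (j : ℕ) * u j ^ k * D j = 0 := by
    intro k hk
    set M : Matrix (Fin (r + 2)) (Fin (r + 2)) ℝ := Matrix.of fun l m =>
      if (m : ℕ) = 0 then u l ^ k else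
        if (m : ℕ) = r + 1 then v l else u l ^ ((m : ℕ) - 1) with hM
    have hzero : M.det = 0 := by
      refine Matrix.det_zero_of_column_eq (i := (0 : Fin (r + 2)))
        (j := ⟨k + 1, by omega⟩) (fun h => by simpa using congrArg Fin.val h) fun l => ?_
      simp only [hM, Matrix.of_apply, Fin.val_zero]
      rw [if_pos trivial, if_neg (by omega), if_neg (by omega)]
      all_goals norm_num
    have hsub : ∀ j : Fin (r + 2), M.submatrix j.succAbove Fin.succ =
        (Matrix.of fun l m : Fin (r + 1) =>
          if (m : ℕ) = r then v (j.succAbove l) else (u (j.succAbove l)) ^ (m : ℕ)) := by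
      intro j
      ext l m
      simp only [hM, Matrix.submatrix_apply, Matrix.of_apply, Fin.val_succ]
      rw [if_neg (by omega)]
      by_cases hm : (m : ℕ) = r
      · rw [if_pos (by omega), if_pos hm]
      · rw [if_neg (by omega), if_neg hm]
        all_goals norm_num
    have hexp := Matrix.det_succ_column_zero M
    rw [hzero] at hexp
    calc ∑ j : Fin (r + 2), (-1 : ℝ) ^ (j : ℕ) * u j ^ k * D j
        = ∑ j : Fin (r + 2), (-1 : ℝ) ^ (j : ℕ) * M j 0 *
            (M.submatrix j.succAbove Fin.succ).det := by
          refine Finset.sum_congr rfl fun j _ => ?_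
          rw [hD j, hsub j]
          congr 1
          all_goals try simp [hM]
      _ = 0 := hexp.symm
  -- cofactor expansion, family B (pure Vandermonde): moment relations for V
  have expB : ∀ k : ℕ, k ≤ r →
      ∑ j : Fin (r + 2), (-1 : ℝ) ^ (j : ℕ) * u j ^ k * V j = 0 := by
    intro k hk
    set M : Matrix (Fin (r + 2)) (Fin (r + 2)) ℝ := Matrix.of fun l m =>
      if (m : ℕ) = 0 then u l ^ k else u l ^ ((m : ℕ) - 1) with hM
    have hzero : M.det = 0 := by
      refine Matrix.det_zero_of_column_eq (i := (0 : Fin (r + 2)))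
        (j := ⟨k + 1, by omega⟩) (fun h => by simpa using congrArg Fin.val h) fun l => ?_
      simp only [hM, Matrix.of_apply, Fin.val_zero]
      rw [if_pos trivial, if_neg (by omega)]
      all_goals norm_num
    have hsub : ∀ j : Fin (r + 2), M.submatrix j.succAbove Fin.succ =
        Matrix.vandermonde (u ∘ j.succAbove) := by
      intro j
      ext l m
      simp only [hM, Matrix.submatrix_apply, Matrix.of_apply, Fin.val_succ,
        Matrix.vandermonde, Function.comp]
      rw [if_neg (by omega)]
      all_goals norm_num
    have hexp := Matrix.det_succ_column_zero M
    rw [hzero] at hexp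
    calc ∑ j : Fin (r + 2), (-1 : ℝ) ^ (j : ℕ) * u j ^ k * V j
        = ∑ j : Fin (r + 2), (-1 : ℝ) ^ (j : ℕ) * M j 0 *
            (M.submatrix j.succAbove Fin.succ).det := by
          refine Finset.sum_congr rfl fun j _ => ?_
          rw [hVdef, hsub j]
          congr 1
          all_goals try simp [hM]
      _ = 0 := hexp.symm
  -- set up the affine coefficients matching D at indices 0 and 1
  have hu01 : u 0 < u 1 := hu (by simp [Fin.lt_def])
  set p : ℝ := D 0 / V 0 with hp
  set q : ℝ := D 1 / V 1 with hq
  set b : ℝ := (q - p) / (u 1 - u 0) with hb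
  set a : ℝ := p - b * u 0 with ha
  set x : Fin (r + 2) → ℝ := fun j =>
    (-1 : ℝ) ^ (j : ℕ) * (D j - (a + b * u j) * V j) with hx
  have hne : u 1 - u 0 ≠ 0 := sub_ne_zero.mpr hu01.ne'
  have hx0 : x 0 = 0 := by
    have hab : a + b * u 0 = p := by rw [ha]; ring
    simp only [hx]
    rw [hab, hp, div_mul_cancel₀ _ (hVpos 0).ne', sub_self, mul_zero]
  have hx1 : x 1 = 0 := by
    have hbq : b * (u 1 - u 0) = q - p := div_mul_cancel₀ _ hne
    have hab : a + b * u 1 = q := by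
      have : a + b * u 1 = p + b * (u 1 - u 0) := by rw [ha]; ring
      rw [this, hbq]; ring
    simp only [hx]
    rw [hab, hq, div_mul_cancel₀ _ (hVpos 1).ne', sub_self, mul_zero]
  -- the moment relations for x
  have hsum : ∀ k : ℕ, k < r → ∑ j : Fin (r + 2), x j * u j ^ k = 0 := by
    intro k hk
    have e1 := expA k hk
    have e2 := expB k hk.le
    have e3 := expB (k + 1) (by omega)
    have : ∑ j : Fin (r + 2), x j * u j ^ k =
        ∑ j : Fin (r + 2), ((-1 : ℝ) ^ (j : ℕ) * u j ^ k * D j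
          - (a * ((-1 : ℝ) ^ (j : ℕ) * u j ^ k * V j)
            + b * ((-1 : ℝ) ^ (j : ℕ) * u j ^ (k + 1) * V j))) :=
      Finset.sum_congr rfl fun j _ => by simp only [hx]; ring
    rw [this, Finset.sum_sub_distrib, Finset.sum_add_distrib, ← Finset.mul_sum,
      ← Finset.mul_sum, e1, e2, e3]
    ring
  -- kill the remaining coordinates using an r × r Vandermonde system
  have hxall : ∀ j, x j = 0 := by
    have hy : ∀ i : Fin r, x i.succ.succ = 0 := by
      set W : Matrix (Fin r) (Fin r) ℝ :=
        Matrix.of fun k i => u (i.succ.succ) ^ (k : ℕ) with hW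
      have hinj : Function.Injective fun i : Fin r => u (i.succ.succ) :=
        fun i i' h => (Fin.strictMono_succ.injective
          (Fin.strictMono_succ.injective (hu.injective h)))
      have hdet : W.det ≠ 0 := by
        have hWt : W = (Matrix.vandermonde fun i : Fin r => u (i.succ.succ)).transpose := by
          ext k i
          simp [hW, Matrix.vandermonde]
        rw [hWt, Matrix.det_transpose]
        exact Matrix.det_vandermonde_ne_zero_iff.mpr hinj
      have hmv : W.mulVec (fun i => x i.succ.succ) = 0 := by
        funext k
        have hs := hsum (k : ℕ) k.isLt
        rw [Fin.sum_univ_succ, Fin.sum_univ_succ] at hs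
        rw [hx0] at hs
        rw [show ((0 : Fin (r + 1)).succ) = (1 : Fin (r + 2)) from rfl, hx1] at hs
        simp only [zero_mul, zero_add] at hs
        simp only [Matrix.mulVec, dotProduct, hW, Matrix.of_apply, Pi.zero_apply]
        rw [← hs]
        exact Finset.sum_congr rfl fun i _ => by ring
      have := Matrix.eq_zero_of_mulVec_eq_zero hdet hmv
      intro i
      exact congrFun this i
    intro j
    refine Fin.cases hx0 (fun i => ?_) j
    refine Fin.cases ?_ (fun i' => hy i') i
    exact hx1
  -- hence D j = (a + b * u j) * V j for all j
  have key : ∀ j, D j = (a + b * u j) * V j := by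
    intro j
    have h := hxall j
    simp only [hx] at h
    rcases mul_eq_zero.mp h with h' | h'
    · exact absurd h' (pow_ne_zero _ (by norm_num))
    · linarith [sub_eq_zero.mp h']
  -- endpoints
  have hpend : 0 ≤ a + b * u 0 := by
    have := key 0
    nlinarith [hVpos 0]
  have hqend : 0 ≤ a + b * u (Fin.last (r + 1)) := by
    have := key (Fin.last (r + 1))
    nlinarith [hVpos (Fin.last (r + 1))]
  intro j hj0 hjl
  have h0j : u 0 ≤ u j := (hu.le_iff_le).mpr (Fin.zero_le j)
  have hjlast : u j ≤ u (Fin.last (r + 1)) := (hu.le_iff_le).mpr (Fin.le_last j)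
  have : 0 ≤ a + b * u j := affine_nonneg_of_endpoints h0j hjlast hpend hqend
  rw [key j]
  exact mul_nonneg this (hVpos j).le
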